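/- Let q be a finite-dimensional Lie algebra over a field k of characteristic zero, V a finite-dimensional q-module, and r = q ⋉ V the semidirect product. Identify r* with q* × V*. For η = (α,ξ) ∈ q* × V*, the coadjoint stabilizer of η in r is r_η = {(s,v) ∈ q × V : ξ(s·w) = 0 for all w ∈ V, and α([s,y]) = ξ(y·v) for all y ∈ q}. Then: (i) r_η = {(s,v) : s ∈ q_ξ, α([s,t]) = 0 for all t ∈ q_ξ, and α([s,y]) = ξ(y·v) for all y ∈ q}; in particular the projection of r_η to q equals the kernel of the restriction to q_ξ of the Kirillov form K_α(s,t) = α([s,t]); and (ii) for every s ∈ q_ξ with α([s,t]) = 0 for all t ∈ q_ξ, there exists v ∈ V such that (s,v) ∈ r_η. -/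
import Mathlib


/-- Let `q` be a finite-dimensional Lie algebra over a field of
characteristic zero, `V` a finite-dimensional `q`-module, and `r = q ⋉ V`.
Identifying `r*` with `q* × V*`, the coadjoint stabiliser of `η = (α, ξ)` is
`r_η = {(s,v) : ξ(s·w) = 0 ∀ w, and α([s,y]) = ξ(y·v) ∀ y}`.
Then: (i) `r_η = {(s,v) : s ∈ q_ξ, K_α(s,t) = 0 ∀ t ∈ q_ξ, α([s,y]) = ξ(y·v) ∀ y}`,
and in particular the projection of `r_η` to `q` equals the kernel of the restriction
of the Kirillov form `K_α` to `q_ξ`; (ii) for every `s ∈ q_ξ` with `K_α(s, ·)`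
vanishing on `q_ξ`, there exists `v ∈ V` with `(s,v) ∈ r_η`. -/
theorem coadjoint_stabilizer_of_semidirect_product
    {k L V : Type*} [Field k] [CharZero k] [LieRing L] [LieAlgebra k L]
    [AddCommGroup V] [Module k V] [LieRingModule L V] [LieModule k L V]
    [FiniteDimensional k L] [FiniteDimensional k V]
    (α : Module.Dual k L) (ξ : Module.Dual k V) :
    ({p : L × V | (∀ w : V, ξ ⁅p.1, w⁆ = 0) ∧ ∀ y : L, α ⁅p.1, y⁆ = ξ ⁅y, p.2⁆} =
      {p : L × V | (∀ w : V, ξ ⁅p.1, w⁆ = 0) ∧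
        (∀ t : L, (∀ w : V, ξ ⁅t, w⁆ = 0) → α ⁅p.1, t⁆ = 0) ∧
        ∀ y : L, α ⁅p.1, y⁆ = ξ ⁅y, p.2⁆}) ∧
    ({s : L | ∃ v : V, (∀ w : V, ξ ⁅s, w⁆ = 0) ∧ ∀ y : L, α ⁅s, y⁆ = ξ ⁅y, v⁆} =
      {s : L | (∀ w : V, ξ ⁅s, w⁆ = 0) ∧
        ∀ t : L, (∀ w : V, ξ ⁅t, w⁆ = 0) → α ⁅s, t⁆ = 0}) ∧
    (∀ s : L, (∀ w : V, ξ ⁅s, w⁆ = 0) →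
      (∀ t : L, (∀ w : V, ξ ⁅t, w⁆ = 0) → α ⁅s, t⁆ = 0) →
      ∃ v : V, ∀ y : L, α ⁅s, y⁆ = ξ ⁅y, v⁆) := by
  classical
  -- The linear map sending `v : V` to the functional `y ↦ ξ ⁅y, v⁆` on `L`.
  set Ψ : V →ₗ[k] Module.Dual k L :=
    { toFun := fun v =>
        { toFun := fun y => ξ ⁅y, v⁆
          map_add' := fun a b => by simp [add_lie]
          map_smul' := fun c a => by simp [smul_lie] }
      map_add' := fun a b => by ext y; simp [lie_add]
      map_smul' := fun c a => by ext y; simp [lie_smul] } with hΨ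
  have key : ∀ s : L, (∀ t : L, (∀ w : V, ξ ⁅t, w⁆ = 0) → α ⁅s, t⁆ = 0) →
      ∃ v : V, ∀ y : L, α ⁅s, y⁆ = ξ ⁅y, v⁆ := by
    intro s hs
    set φ : Module.Dual k L :=
      { toFun := fun y => α ⁅s, y⁆
        map_add' := fun a b => by simp [lie_add]
        map_smul' := fun c a => by simp [lie_smul] } with hφdef
    have hφ : φ ∈ (LinearMap.range Ψ) := by
      rw [← Subspace.dualCoannihilator_dualAnnihilator_eq (W := LinearMap.range Ψ),
        Submodule.mem_dualAnnihilator]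
      intro y hy
      rw [Submodule.mem_dualCoannihilator] at hy
      exact hs y fun w => hy (Ψ w) ⟨w, rfl⟩
    obtain ⟨v, hv⟩ := hφ
    exact ⟨v, fun y => (LinearMap.congr_fun hv y).symm⟩
  refine ⟨?_, ?_, fun s _ h => key s h⟩
  · ext p
    simp only [Set.mem_setOf_eq]
    constructor
    · rintro ⟨h1, h2⟩
      exact ⟨h1, fun t ht => by rw [h2 t, ht], h2⟩
    · rintro ⟨h1, _, h3⟩; exact ⟨h1, h3⟩
  · ext s
    simp only [Set.mem_setOf_eq]
    constructor
    · rintro ⟨v, h1, h2⟩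
      exact ⟨h1, fun t ht => by rw [h2 t, ht]⟩
    · rintro ⟨h1, h2⟩
      obtain ⟨v, hv⟩ := key s h2
      exact ⟨v, h1, hv⟩
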